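/- Under the same setup (L_j independent with P(L_j > t) = exp(−a_j t^δ), weights t_j > 0, G_k = ∑_j a_j (t_j/t_k)^δ), the conditional density of L_k given the association event E_k = {t_k L_k^{−1} ≥ t_j L_j^{−1} ∀j} is f(l) = δ G_k l^{δ−1} exp(−G_k l^δ) for l ≥ 0; equivalently, conditioned on E_k, L_k^δ is exponentially distributed with rate G_k. -/

import Mathlib

open MeasureTheory ProbabilityTheory Finset

section Aux

open Real Set

variable {Ω : Type*} [MeasurableSpace Ω]

lemma aux_measurable_inf' {ι : Type*} (s : Finset ι) (hs : s.Nonempty)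
    (f : ι → Ω → ℝ) (hf : ∀ i, Measurable (f i)) :
    Measurable (fun ω => s.inf' hs (fun i => f i ω)) := by
  induction hs using Finset.Nonempty.cons_induction with
  | singleton i => simpa using hf i
  | cons i s hi hne ih =>
    have heq : ∀ ω, (Finset.cons i s hi).inf' (Finset.cons_nonempty hi) (fun j => f j ω)
        = min (f i ω) (s.inf' hne fun j => f j ω) := fun ω => by
      rw [Finset.inf'_cons]
    simpa [funext heq] using (hf i).min ih

lemma aux_inf'_attach {ι : Type*} (s : Finset ι) (h : s.Nonempty) (f : ι → ℝ) :
    s.attach.inf' h.attach (fun i => f i) = s.inf' h f := by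
  apply le_antisymm
  · exact Finset.le_inf' _ _ fun b hb => Finset.inf'_le _ (Finset.mem_attach _ ⟨b, hb⟩)
  · exact Finset.le_inf' _ _ fun i _ => Finset.inf'_le _ i.2

lemma aux_expMeasure_Iic {r : ℝ} (hr : 0 < r) (s : ℝ) :
    expMeasure r (Set.Iic s)
      = ENNReal.ofReal (if 0 ≤ s then 1 - Real.exp (-(r * s)) else 0) := by
  have h : expMeasure r = volume.withDensity (exponentialPDF r) := rfl
  rw [h, withDensity_apply _ measurableSet_Iic, lintegral_exponentialPDF_eq_antiDeriv hr]

lemma aux_expMeasure_Ioi {r : ℝ} (hr : 0 < r) {s : ℝ} (hs : 0 ≤ s) :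
    expMeasure r (Set.Ioi s) = ENNReal.ofReal (Real.exp (-(r * s))) := by
  haveI := isProbabilityMeasure_expMeasure hr
  rw [← Set.compl_Iic, measure_compl measurableSet_Iic (measure_ne_top _ _), measure_univ,
    aux_expMeasure_Iic hr, if_pos hs]
  refine ENNReal.sub_eq_of_eq_add ENNReal.ofReal_ne_top ?_
  rw [← ENNReal.ofReal_add (Real.exp_nonneg _) (by
      have := Real.exp_le_one_iff.2 (by nlinarith : -(r * s) ≤ 0); linarith)]
  norm_num

lemma aux_expMeasure_Ici {r : ℝ} (hr : 0 < r) {s : ℝ} (hs : 0 ≤ s) :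
    expMeasure r (Set.Ici s) = ENNReal.ofReal (Real.exp (-(r * s))) := by
  rw [← aux_expMeasure_Ioi hr hs]
  have h0 : expMeasure r {s} = 0 :=
    withDensity_absolutelyContinuous volume _ (measure_singleton s)
  apply le_antisymm
  · rw [← Set.Ioi_union_left]
    exact le_trans (measure_union_le _ _) (by rw [h0, add_zero])
  · exact measure_mono Set.Ioi_subset_Ici_self

/-- The law of a positive random variable with exponential complementary CDF is the
exponential measure. -/
lemma aux_map_eq_expMeasure (P : Measure Ω) [IsProbabilityMeasure P]
    (X : Ω → ℝ) (hX : Measurable X) (hpos : ∀ ω, 0 < X ω) {r : ℝ} (hr : 0 < r)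
    (hccdf : ∀ s : ℝ, 0 ≤ s → P {ω | s < X ω} = ENNReal.ofReal (Real.exp (-(r * s)))) :
    P.map X = expMeasure r := by
  haveI : IsProbabilityMeasure (P.map X) := Measure.isProbabilityMeasure_map hX.aemeasurable
  refine MeasureTheory.Measure.ext_of_Iic _ _ (fun s => ?_)
  rw [Measure.map_apply hX measurableSet_Iic, aux_expMeasure_Iic hr]
  by_cases hs : 0 ≤ s
  · have h1 : X ⁻¹' Set.Iic s = {ω | s < X ω}ᶜ := by
      ext ω; simp [not_lt]
    have h2 : {ω | s < X ω} = X ⁻¹' Set.Ioi s := rfl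
    rw [h1, measure_compl (by rw [h2]; exact hX measurableSet_Ioi) (measure_ne_top _ _),
      measure_univ, hccdf s hs, if_pos hs]
    refine ENNReal.sub_eq_of_eq_add ENNReal.ofReal_ne_top ?_
    rw [← ENNReal.ofReal_add (by
        have := Real.exp_le_one_iff.2 (by nlinarith : -(r * s) ≤ 0); linarith)
      (Real.exp_nonneg _)]
    norm_num
  · have h1 : X ⁻¹' Set.Iic s = ∅ := by
      ext ω
      simp only [Set.mem_preimage, Set.mem_Iic, Set.mem_empty_iff_false, iff_false, not_le]
      exact lt_of_lt_of_le (by linarith) (hpos ω).le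
    rw [h1, if_neg hs]
    simp

/-- Key computation: for independent exponential random variables, the probability that the
`k`-th one is the minimum and exceeds `y`. -/
lemma aux_key (P : Measure Ω) [IsProbabilityMeasure P]
    {K : ℕ} (X : Fin K → Ω → ℝ) (hXm : ∀ j, Measurable (X j)) (hXpos : ∀ j ω, 0 < X j ω)
    (hind : iIndepFun X P)
    (lam : Fin K → ℝ) (hlam : ∀ j, 0 < lam j)
    (hccdf : ∀ j, ∀ s : ℝ, 0 ≤ s →
      P {ω | s < X j ω} = ENNReal.ofReal (Real.exp (-(lam j * s))))
    (k : Fin K) (y : ℝ) (hy : 0 ≤ y) :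
    P ({ω | ∀ j, X k ω ≤ X j ω} ∩ {ω | y < X k ω}) =
      ENNReal.ofReal ((lam k / ∑ j, lam j) * Real.exp (-((∑ j, lam j) * y))) := by
  classical
  haveI : Nonempty (Fin K) := ⟨k⟩
  set Λ : ℝ := ∑ j, lam j with hΛdef
  have hΛ : 0 < Λ := Finset.sum_pos (fun j _ => hlam j) Finset.univ_nonempty
  rcases Finset.eq_empty_or_nonempty (Finset.univ.erase k) with hemp | hne
  · -- degenerate case : `k` is the only index
    have hall : ∀ j, j = k := by
      intro j
      by_contra hj
      have : j ∈ Finset.univ.erase k := Finset.mem_erase.2 ⟨hj, Finset.mem_univ j⟩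
      rw [hemp] at this
      exact absurd this (Finset.notMem_empty j)
    have huniv : (Finset.univ : Finset (Fin K)) = {k} :=
      Finset.eq_singleton_iff_unique_mem.2 ⟨Finset.mem_univ k, fun j _ => hall j⟩
    have hΛk : Λ = lam k := by rw [hΛdef, huniv, Finset.sum_singleton]
    have hset : {ω | ∀ j, X k ω ≤ X j ω} = Set.univ := by
      ext ω
      simp only [Set.mem_setOf_eq, Set.mem_univ, iff_true]
      intro j; rw [hall j]
    rw [hset, Set.univ_inter, hccdf k y hy, hΛk, div_self (hlam k).ne', one_mul]
  · -- main case: there is at least one other index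
    set s : Finset (Fin K) := Finset.univ.erase k with hsdef
    set M : Ω → ℝ := fun ω => s.inf' hne (fun j => X j ω) with hMdef
    have hMm : Measurable M := aux_measurable_inf' s hne X hXm
    have hMpos : ∀ ω, 0 < M ω := fun ω =>
      (Finset.lt_inf'_iff _).2 fun j _ => hXpos j ω
    set β : ℝ := ∑ j ∈ s, lam j with hβdef
    have hβ : 0 < β := Finset.sum_pos (fun j _ => hlam j) hne
    have hβk : lam k + β = Λ := by
      rw [hΛdef, hβdef, hsdef, Finset.add_sum_erase _ _ (Finset.mem_univ k)]
    -- complementary CDF of M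
    have hMccdf : ∀ u : ℝ, 0 ≤ u →
        P {ω | u < M ω} = ENNReal.ofReal (Real.exp (-(β * u))) := by
      intro u hu
      have h1 : {ω | u < M ω} = ⋂ j ∈ s, X j ⁻¹' Set.Ioi u := by
        ext ω
        simp [hMdef, Finset.lt_inf'_iff]
      rw [h1, hind.meas_biInter (fun i _ => ⟨Set.Ioi u, measurableSet_Ioi, rfl⟩)]
      have h2 : ∀ j ∈ s, P (X j ⁻¹' Set.Ioi u)
          = ENNReal.ofReal (Real.exp (-(lam j * u))) := by
        intro j _
        exact hccdf j u hu
      rw [Finset.prod_congr rfl h2, ← ENNReal.ofReal_prod_of_nonneg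
        (fun j _ => (Real.exp_nonneg _))]
      congr 1
      rw [← Real.exp_sum]
      congr 1
      rw [hβdef, Finset.sum_mul]
      simp
    -- independence of X k and M
    have hdisj : Disjoint ({k} : Finset (Fin K)) s := by
      simp [hsdef, Finset.disjoint_left]
    have h1 := hind.indepFun_finset {k} s hdisj hXm
    set φ : (({k} : Finset (Fin K)) → ℝ) → ℝ :=
      fun v => v ⟨k, Finset.mem_singleton_self k⟩ with hφdef
    set ψ : ({j // j ∈ s} → ℝ) → ℝ :=
      fun v => s.attach.inf' hne.attach (fun i => v i) with hψdef
    have hφm : Measurable φ := measurable_pi_apply _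
    have hψm : Measurable ψ := by
      apply aux_measurable_inf' (Ω := {j // j ∈ s} → ℝ) (ι := {j // j ∈ s})
        s.attach hne.attach (fun i v => v i)
      exact fun i => measurable_pi_apply i
    have h2 := h1.comp hφm hψm
    have e1 : φ ∘ (fun a (i : ({k} : Finset (Fin K))) => X i a) = X k := rfl
    have e2 : ψ ∘ (fun a (i : {j // j ∈ s}) => X i a) = M := by
      funext a
      exact aux_inf'_attach s hne (fun j => X j a)
    rw [e1, e2] at h2
    -- laws
    have hlawX : P.map (X k) = expMeasure (lam k) :=
      aux_map_eq_expMeasure P (X k) (hXm k) (hXpos k) (hlam k) (hccdf k)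
    have hlawM : P.map M = expMeasure β :=
      aux_map_eq_expMeasure P M hMm hMpos hβ hMccdf
    have hjoint : P.map (fun ω => (X k ω, M ω))
        = (expMeasure (lam k)).prod (expMeasure β) := by
      rw [← hlawX, ← hlawM]
      exact (indepFun_iff_map_prod_eq_prod_map_map (hXm k).aemeasurable hMm.aemeasurable).1 h2
    -- rewrite the event
    set S : Set (ℝ × ℝ) := {p : ℝ × ℝ | p.1 ≤ p.2 ∧ y < p.1} with hSdef
    have hSmeas : MeasurableSet S :=
      (measurableSet_le measurable_fst measurable_snd).inter
        (measurable_fst measurableSet_Ioi)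
    have hset : {ω | ∀ j, X k ω ≤ X j ω} ∩ {ω | y < X k ω}
        = (fun ω => (X k ω, M ω)) ⁻¹' S := by
      ext ω
      simp only [Set.mem_inter_iff, Set.mem_setOf_eq, Set.mem_preimage, hSdef]
      constructor
      · rintro ⟨h1', h2'⟩
        exact ⟨(Finset.le_inf'_iff _ _).2 fun j _ => h1' j, h2'⟩
      · rintro ⟨h1', h2'⟩
        refine ⟨fun j => ?_, h2'⟩
        by_cases hj : j = k
        · rw [hj]
        · exact le_trans h1'
            (Finset.inf'_le _ (Finset.mem_erase.2 ⟨hj, Finset.mem_univ j⟩))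
    haveI hPβ := isProbabilityMeasure_expMeasure hβ
    haveI hPk := isProbabilityMeasure_expMeasure (hlam k)
    haveI hPΛ := isProbabilityMeasure_expMeasure hΛ
    rw [hset, ← Measure.map_apply ((hXm k).prodMk hMm) hSmeas, hjoint,
      Measure.prod_apply hSmeas]
    have hfiber : ∀ u : ℝ, expMeasure β (Prod.mk u ⁻¹' S)
        = Set.indicator (Set.Ioi y) (fun u => expMeasure β (Set.Ici u)) u := by
      intro u
      rw [Set.indicator_apply]
      by_cases h : u ∈ Set.Ioi y
      · rw [if_pos h]
        congr 1
        ext m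
        simp only [hSdef, Set.mem_preimage, Set.mem_setOf_eq, Set.mem_Ici]
        exact and_iff_left h
      · rw [if_neg h]
        have hemp : Prod.mk u ⁻¹' S = ∅ := by
          ext m
          simp only [hSdef, Set.mem_preimage, Set.mem_setOf_eq, Set.mem_empty_iff_false,
            iff_false, not_and]
          exact fun _ => h
        rw [hemp, measure_empty]
    rw [lintegral_congr hfiber, lintegral_indicator measurableSet_Ioi]
    have hstep1 : ∫⁻ u in Set.Ioi y, expMeasure β (Set.Ici u) ∂(expMeasure (lam k))
        = ∫⁻ u in Set.Ioi y, ENNReal.ofReal (Real.exp (-(β * u))) ∂(expMeasure (lam k)) := by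
      refine setLIntegral_congr_fun measurableSet_Ioi (fun u hu => ?_)
      exact aux_expMeasure_Ici hβ (le_trans hy (le_of_lt hu))
    rw [hstep1]
    have hgm : Measurable (fun u : ℝ => ENNReal.ofReal (Real.exp (-(β * u)))) :=
      ((Real.measurable_exp.comp ((measurable_id.const_mul β).neg))).ennreal_ofReal
    have hfm : Measurable (exponentialPDF (lam k)) :=
      (measurable_exponentialPDFReal (lam k)).ennreal_ofReal
    have hexp_eq : expMeasure (lam k) = volume.withDensity (exponentialPDF (lam k)) := rfl
    rw [hexp_eq, restrict_withDensity measurableSet_Ioi,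
      lintegral_withDensity_eq_lintegral_mul _ hfm hgm]
    have hstep2 : ∫⁻ u in Set.Ioi y,
          (exponentialPDF (lam k) * fun u => ENNReal.ofReal (Real.exp (-(β * u)))) u
        = ∫⁻ u in Set.Ioi y, ENNReal.ofReal (lam k / Λ) * exponentialPDF Λ u := by
      refine setLIntegral_congr_fun measurableSet_Ioi (fun u hu => ?_)
      have hu0 : 0 ≤ u := le_trans hy (le_of_lt hu)
      simp only [Pi.mul_apply]
      rw [exponentialPDF_of_nonneg hu0, exponentialPDF_of_nonneg hu0,
        ← ENNReal.ofReal_mul (mul_nonneg (hlam k).le (Real.exp_nonneg _)),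
        ← ENNReal.ofReal_mul (div_nonneg (hlam k).le hΛ.le)]
      congr 1
      have hexp : Real.exp (-(lam k * u)) * Real.exp (-(β * u)) = Real.exp (-(Λ * u)) := by
        rw [← Real.exp_add]
        congr 1
        rw [← hβk]; ring
      calc lam k * Real.exp (-(lam k * u)) * Real.exp (-(β * u))
          = lam k * Real.exp (-(Λ * u)) := by rw [mul_assoc, hexp]
        _ = lam k / Λ * (Λ * Real.exp (-(Λ * u))) := by
            rw [div_mul_eq_mul_div, eq_comm, div_eq_iff hΛ.ne']; ring
    rw [hstep2, lintegral_const_mul _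
      (show Measurable (exponentialPDF Λ) from (measurable_exponentialPDFReal Λ).ennreal_ofReal)]
    have hfin : ∫⁻ u in Set.Ioi y, exponentialPDF Λ u = expMeasure Λ (Set.Ioi y) := by
      rw [show expMeasure Λ = volume.withDensity (exponentialPDF Λ) from rfl,
        withDensity_apply _ measurableSet_Ioi]
    rw [hfin, aux_expMeasure_Ioi hΛ hy, ← ENNReal.ofReal_mul (div_nonneg (hlam k).le hΛ.le)]

end Aux

/-- Conditioned on the association event `E_k = {t_k L_k⁻¹ ≥ t_j L_j⁻¹ ∀ j}`, the path loss
`L_k` has density `δ G_k l^{δ-1} exp(-G_k l^δ)`; equivalently, `L_k^δ` is exponentially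
distributed with rate `G_k = ∑_j a_j (t_j/t_k)^δ`. -/
theorem stmt_2 {Ω : Type*} [MeasurableSpace Ω] (P : Measure Ω) [IsProbabilityMeasure P]
    (K : ℕ) (hK : 0 < K) (L : Fin K → Ω → ℝ) (hLmeas : ∀ j, Measurable (L j))
    (hLpos : ∀ j ω, 0 < L j ω)
    (hindep : iIndepFun L P)
    (a t : Fin K → ℝ) (ha : ∀ j, 0 < a j) (ht : ∀ j, 0 < t j)
    (δ : ℝ) (hδ : δ ∈ Set.Ioo (0 : ℝ) 1)
    (hccdf : ∀ j, ∀ s : ℝ, 0 ≤ s →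
      P {ω | s < L j ω} = ENNReal.ofReal (Real.exp (-(a j) * s ^ δ)))
    (k : Fin K) (x : ℝ) (hx : 0 ≤ x) :
    P[{ω | x < L k ω ^ δ} | {ω | ∀ j, t j * (L j ω)⁻¹ ≤ t k * (L k ω)⁻¹}] =
      ENNReal.ofReal (Real.exp (-(∑ j, a j * (t j / t k) ^ δ) * x)) := by
  obtain ⟨hδ0, hδ1⟩ := hδ
  have hδ0' : δ ≠ 0 := ne_of_gt hδ0
  -- transformed variables
  set X : Fin K → Ω → ℝ := fun j ω => (L j ω / t j) ^ δ with hXdef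
  set lam : Fin K → ℝ := fun j => a j * t j ^ δ with hlamdef
  set Λ : ℝ := ∑ j, lam j with hΛdef
  set y : ℝ := x / t k ^ δ with hydef
  have htk : (0:ℝ) < t k ^ δ := Real.rpow_pos_of_pos (ht k) δ
  have hy : 0 ≤ y := div_nonneg hx htk.le
  have hXm : ∀ j, Measurable (X j) := fun j =>
    (Real.continuous_rpow_const hδ0.le).measurable.comp ((hLmeas j).div_const (t j))
  have hXpos : ∀ j ω, 0 < X j ω := fun j ω =>
    Real.rpow_pos_of_pos (div_pos (hLpos j ω) (ht j)) δ
  have hXind : iIndepFun X P := by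
    have := hindep.comp (fun j (u : ℝ) => (u / t j) ^ δ)
      (fun j => (Real.continuous_rpow_const hδ0.le).measurable.comp (measurable_id.div_const _))
    exact this
  have hlam : ∀ j, 0 < lam j := fun j =>
    mul_pos (ha j) (Real.rpow_pos_of_pos (ht j) δ)
  have hXccdf : ∀ j, ∀ s : ℝ, 0 ≤ s →
      P {ω | s < X j ω} = ENNReal.ofReal (Real.exp (-(lam j * s))) := by
    intro j s hs
    have hset : {ω | s < X j ω} = {ω | t j * s ^ δ⁻¹ < L j ω} := by
      ext ω
      simp only [Set.mem_setOf_eq, hXdef]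
      have hkey : s < (L j ω / t j) ^ δ ↔ s ^ δ⁻¹ < L j ω / t j := by
        conv_lhs => rw [show s = (s ^ δ⁻¹) ^ δ from (Real.rpow_inv_rpow hs hδ0').symm]
        exact Real.rpow_lt_rpow_iff (Real.rpow_nonneg hs _)
          (div_pos (hLpos j ω) (ht j)).le hδ0
      rw [hkey, lt_div_iff₀ (ht j), mul_comm]
    rw [hset, hccdf j _ (mul_nonneg (ht j).le (Real.rpow_nonneg hs _))]
    congr 1
    rw [Real.mul_rpow (ht j).le (Real.rpow_nonneg hs _), Real.rpow_inv_rpow hs hδ0']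
    simp only [hlamdef]
    ring
  -- rewrite the events
  have hE : {ω | ∀ j, t j * (L j ω)⁻¹ ≤ t k * (L k ω)⁻¹} = {ω | ∀ j, X k ω ≤ X j ω} := by
    ext ω
    simp only [Set.mem_setOf_eq]
    refine forall_congr' fun j => ?_
    have h1 : t j * (L j ω)⁻¹ ≤ t k * (L k ω)⁻¹ ↔ L k ω / t k ≤ L j ω / t j := by
      rw [mul_comm (t j), mul_comm (t k), ← div_eq_inv_mul, ← div_eq_inv_mul,
        div_le_div_iff₀ (hLpos j ω) (hLpos k ω), div_le_div_iff₀ (ht k) (ht j)]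
      constructor <;> intro h <;> nlinarith
    rw [h1, hXdef]
    exact (Real.rpow_le_rpow_iff (div_pos (hLpos k ω) (ht k)).le
      (div_pos (hLpos j ω) (ht j)).le hδ0).symm
  have hA : {ω | x < L k ω ^ δ} = {ω | y < X k ω} := by
    ext ω
    simp only [Set.mem_setOf_eq, hXdef, hydef]
    rw [Real.div_rpow (hLpos k ω).le (ht k).le, div_lt_div_iff₀ htk htk]
    constructor <;> intro h <;> nlinarith
  have hEmeas : MeasurableSet {ω | ∀ j, t j * (L j ω)⁻¹ ≤ t k * (L k ω)⁻¹} := by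
    have : {ω | ∀ j, t j * (L j ω)⁻¹ ≤ t k * (L k ω)⁻¹}
        = ⋂ j, {ω | t j * (L j ω)⁻¹ ≤ t k * (L k ω)⁻¹} := by
      ext ω; simp
    rw [this]
    exact MeasurableSet.iInter fun j =>
      measurableSet_le (measurable_const.mul (hLmeas j).inv)
        (measurable_const.mul (hLmeas k).inv)
  rw [cond_apply hEmeas]
  -- the unconditional probabilities via the key lemma
  have hEfull : {ω | ∀ j, t j * (L j ω)⁻¹ ≤ t k * (L k ω)⁻¹}
      = {ω | ∀ j, X k ω ≤ X j ω} ∩ {ω | (0:ℝ) < X k ω} := by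
    rw [hE]
    ext ω
    simp only [Set.mem_inter_iff, Set.mem_setOf_eq]
    exact ⟨fun h => ⟨h, hXpos k ω⟩, fun h => h.1⟩
  have hPE : P {ω | ∀ j, t j * (L j ω)⁻¹ ≤ t k * (L k ω)⁻¹}
      = ENNReal.ofReal (lam k / Λ) := by
    rw [hEfull, aux_key P X hXm hXpos hXind lam hlam hXccdf k 0 le_rfl]
    simp [hΛdef]
  have hPEA : P ({ω | ∀ j, t j * (L j ω)⁻¹ ≤ t k * (L k ω)⁻¹} ∩ {ω | x < L k ω ^ δ})
      = ENNReal.ofReal ((lam k / Λ) * Real.exp (-(Λ * y))) := by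
    rw [hE, hA]
    exact aux_key P X hXm hXpos hXind lam hlam hXccdf k y hy
  rw [hPE, hPEA]
  have hΛpos : 0 < Λ := by
    rw [hΛdef]
    exact Finset.sum_pos (fun j _ => hlam j) ⟨k, Finset.mem_univ k⟩
  have hc : 0 < lam k / Λ := div_pos (hlam k) hΛpos
  rw [ENNReal.ofReal_mul hc.le, ← mul_assoc,
    ENNReal.inv_mul_cancel (ENNReal.ofReal_pos.2 hc).ne' ENNReal.ofReal_ne_top, one_mul]
  congr 2
  -- exponent arithmetic
  have hsum : (∑ j, a j * (t j / t k) ^ δ) = Λ / t k ^ δ := by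
    rw [hΛdef, Finset.sum_div]
    refine Finset.sum_congr rfl fun j _ => ?_
    rw [hlamdef, Real.div_rpow (ht j).le (ht k).le]
    ring
  rw [hsum, hydef]
  field_simp
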